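/- As x → ∞, the ratio of ∫₀^∞ e^{-(x+y)²/2} y² dy to (2/x³) e^{-x²/2} tends to 1. -/

import Mathlib

open MeasureTheory Real Filter

lemma aux_int_pow (b : ℝ) (hb : 0 < b) (n : ℕ) (hn : 0 < n) :
    ∫ y in Set.Ioi (0 : ℝ), y ^ n * Real.exp (-b * y) = (Nat.factorial n : ℝ) / b ^ (n + 1) := by
  have h := integral_rpow_mul_exp_neg_mul_rpow (p := 1) (q := n) (b := b)
    one_pos (neg_one_lt_zero.trans_le (Nat.cast_nonneg n)) hb
  rw [show ∫ x in Set.Ioi (0:ℝ), x ^ (n:ℝ) * Real.exp (-b * x ^ (1:ℝ))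
      = ∫ y in Set.Ioi (0 : ℝ), y ^ n * Real.exp (-b * y) from
    setIntegral_congr_fun measurableSet_Ioi (fun y hy => by
      rw [Real.rpow_one, Real.rpow_natCast])] at h
  rw [show ((n:ℝ) + 1) / 1 = (n:ℝ) + 1 by ring,
    show (-((n:ℝ) + 1) / 1) = -((n+1 : ℕ) : ℝ) by push_cast; ring] at h
  rw [h, Real.Gamma_nat_eq_factorial, Real.rpow_neg hb.le, Real.rpow_natCast]
  field_simp

lemma aux_integrableOn_pow (b : ℝ) (hb : 0 < b) (n : ℕ) :
    IntegrableOn (fun y => y ^ n * Real.exp (-b * y)) (Set.Ioi (0 : ℝ)) := by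
  have h := integrableOn_rpow_mul_exp_neg_mul_rpow (p := 1) (s := n) (b := b)
    (neg_one_lt_zero.trans_le (Nat.cast_nonneg n)) one_pos hb
  apply h.congr_fun (fun y hy => by rw [Real.rpow_one, Real.rpow_natCast]) measurableSet_Ioi

lemma aux_integrableOn_main (x : ℝ) (hx : 0 < x) :
    IntegrableOn (fun y => Real.exp (-(x + y) ^ 2 / 2) * y ^ 2) (Set.Ioi (0 : ℝ)) := by
  apply Integrable.mono' (aux_integrableOn_pow x hx 2)
  · exact (Continuous.mul (by continuity) (by continuity)).aestronglyMeasurable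
  · filter_upwards [ae_restrict_mem measurableSet_Ioi] with y hy
    have hy0 : (0:ℝ) < y := hy
    rw [Real.norm_eq_abs, abs_mul, abs_of_pos (Real.exp_pos _), abs_of_nonneg (by positivity)]
    rw [mul_comm (y^2)]
    gcongr <;> nlinarith [sq_nonneg y, sq_nonneg (x + y), Real.exp_pos (-x*y)]

theorem stmt_6 :
    Tendsto (fun x : ℝ =>
        (∫ y in Set.Ioi (0 : ℝ), Real.exp (-(x + y) ^ 2 / 2) * y ^ 2) /
          (2 / x ^ 3 * Real.exp (-x ^ 2 / 2)))
      atTop (nhds 1) := by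
  have hupper : ∀ x : ℝ, 0 < x →
      (∫ y in Set.Ioi (0 : ℝ), Real.exp (-(x + y) ^ 2 / 2) * y ^ 2)
        ≤ 2 / x ^ 3 * Real.exp (-x ^ 2 / 2) := by
    intro x hx
    have h1 : (∫ y in Set.Ioi (0 : ℝ), Real.exp (-(x + y) ^ 2 / 2) * y ^ 2)
        ≤ ∫ y in Set.Ioi (0 : ℝ), Real.exp (-x ^ 2 / 2) * (y ^ 2 * Real.exp (-x * y)) := by
      apply setIntegral_mono_on (aux_integrableOn_main x hx)
        ((aux_integrableOn_pow x hx 2).const_mul _) measurableSet_Ioi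
      intro y hy
      have hy0 : (0:ℝ) < y := hy
      rw [show Real.exp (-x ^ 2 / 2) * (y ^ 2 * Real.exp (-x * y))
          = Real.exp (-x ^ 2 / 2) * Real.exp (-x * y) * y ^ 2 by ring,
        ← Real.exp_add]
      gcongr <;> nlinarith [sq_nonneg y]
    rw [integral_const_mul, aux_int_pow x hx 2 (by norm_num)] at h1
    calc _ ≤ _ := h1
      _ = 2 / x ^ 3 * Real.exp (-x ^ 2 / 2) := by
          norm_num [Nat.factorial]; ring
  have hlower : ∀ x : ℝ, 0 < x →
      (2 / x ^ 3 - 12 / x ^ 5) * Real.exp (-x ^ 2 / 2)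
        ≤ ∫ y in Set.Ioi (0 : ℝ), Real.exp (-(x + y) ^ 2 / 2) * y ^ 2 := by
    intro x hx
    have h1 : (∫ y in Set.Ioi (0 : ℝ), Real.exp (-x ^ 2 / 2) *
          (y ^ 2 * Real.exp (-x * y) - (1/2) * (y ^ 4 * Real.exp (-x * y))))
        ≤ ∫ y in Set.Ioi (0 : ℝ), Real.exp (-(x + y) ^ 2 / 2) * y ^ 2 := by
      apply setIntegral_mono_on _ (aux_integrableOn_main x hx) measurableSet_Ioi
      · intro y hy
        have hy0 : (0:ℝ) < y := hy
        have key : Real.exp (-(x + y) ^ 2 / 2)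
            = Real.exp (-x ^ 2 / 2) * Real.exp (-x * y) * Real.exp (-y ^ 2 / 2) := by
          rw [← Real.exp_add, ← Real.exp_add]; ring_nf
        rw [key]
        have h2 : 1 - y ^ 2 / 2 ≤ Real.exp (-y ^ 2 / 2) := by
          have := Real.add_one_le_exp (-y ^ 2 / 2); linarith
        have hnn : (0:ℝ) ≤ Real.exp (-x^2/2) * Real.exp (-x*y) * y^2 := by positivity
        calc Real.exp (-x ^ 2 / 2) * (y ^ 2 * Real.exp (-x * y) - 1 / 2 * (y ^ 4 * Real.exp (-x * y)))
            = Real.exp (-x ^ 2 / 2) * Real.exp (-x * y) * ((1 - y ^ 2 / 2) * y ^ 2) := by ring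
          _ ≤ Real.exp (-x ^ 2 / 2) * Real.exp (-x * y) * (Real.exp (-y ^ 2 / 2) * y ^ 2) := by
              gcongr
          _ = Real.exp (-x ^ 2 / 2) * Real.exp (-x * y) * Real.exp (-y ^ 2 / 2) * y ^ 2 := by ring
      · exact (((aux_integrableOn_pow x hx 2).sub
          ((aux_integrableOn_pow x hx 4).const_mul (1/2))).const_mul _)
    rw [integral_const_mul, integral_sub (aux_integrableOn_pow x hx 2)
      ((aux_integrableOn_pow x hx 4).const_mul (1/2)), integral_const_mul,
      aux_int_pow x hx 2 (by norm_num), aux_int_pow x hx 4 (by norm_num)] at h1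
    calc (2 / x ^ 3 - 12 / x ^ 5) * Real.exp (-x ^ 2 / 2)
        = Real.exp (-x ^ 2 / 2) * ((Nat.factorial 2 : ℝ) / x ^ (2+1) - 1/2 * ((Nat.factorial 4 : ℝ) / x ^ (4+1))) := by
          norm_num [Nat.factorial]; ring
      _ ≤ _ := h1
  -- squeeze
  have hd : ∀ x : ℝ, 0 < x → 0 < 2 / x ^ 3 * Real.exp (-x ^ 2 / 2) := by
    intro x hx; positivity
  apply tendsto_of_tendsto_of_tendsto_of_le_of_le' (g := fun x : ℝ => 1 - 6 / x ^ 2)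
    (h := fun _ : ℝ => (1:ℝ))
  · have : Tendsto (fun x : ℝ => 6 / x ^ 2) atTop (nhds 0) := by
      apply Tendsto.div_atTop tendsto_const_nhds
      exact tendsto_pow_atTop (by norm_num)
    simpa using tendsto_const_nhds.sub this
  · exact tendsto_const_nhds
  · filter_upwards [eventually_gt_atTop 0] with x hx
    rw [le_div_iff₀ (hd x hx)]
    calc (1 - 6 / x ^ 2) * (2 / x ^ 3 * Real.exp (-x ^ 2 / 2))
        = (2 / x ^ 3 - 12 / x ^ 5) * Real.exp (-x ^ 2 / 2) := by
          field_simp; ring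
      _ ≤ _ := hlower x hx
  · filter_upwards [eventually_gt_atTop 0] with x hx
    rw [div_le_one (hd x hx)]
    exact hupper x hx
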